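/- arXiv:2103.09587 — 2 statements merged into one kernel-verified Lean document; each statement's English description precedes it below -/
import Mathlib

section
/- For all languages U, V over an alphabet Σ, (U ⧢ V^{⧢,*})^{⧢,*} = (U ⧢ (U ∪ V)^{⧢,*}) ∪ {ε}. -/
/-- `IsShuffle u v w` means `w` is an interleaving (shuffle) of `u` and `v`,
i.e. `w = x₁y₁⋯xₙyₙ` with `u = x₁⋯xₙ` and `v = y₁⋯yₙ`. -/
inductive IsShuffle {α : Type*} : List α → List α → List α → Prop
  | nil : IsShuffle [] [] []
  | left {a : α} {u v w : List α} : IsShuffle u v w → IsShuffle (a :: u) v (a :: w)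
  | right {a : α} {u v w : List α} : IsShuffle u v w → IsShuffle u (a :: v) (a :: w)

/-- Shuffle of two languages: `U ⧢ V = ⋃_{x∈U, y∈V} (x ⧢ y)`. -/
def Language.shuffle {α : Type*} (U V : Language α) : Language α :=
  { w | ∃ u ∈ U, ∃ v ∈ V, IsShuffle u v w }

/-- The `n`-fold shuffle of a language with itself (`0`-fold is `{ε}`). -/
def Language.shufflePow {α : Type*} (L : Language α) : ℕ → Language α
  | 0 => 1
  | n + 1 => (L.shufflePow n).shuffle L

/-- Iterated shuffle (shuffle closure): `L^{⧢,*} = ⋃_{n ≥ 0} L^{⧢,n}`. -/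
def Language.shuffleStar {α : Type*} (L : Language α) : Language α :=
  { w | ∃ n, w ∈ L.shufflePow n }

/-- Commutative (permutation) closure: all words with the same letter counts
as some word of `L`. -/
def Language.perm {α : Type*} [DecidableEq α] (L : Language α) : Language α :=
  { u | ∃ w ∈ L, ∀ a : α, u.count a = w.count a }

instance {α : Type*} : Union (Language α) := ⟨fun U V => { w | w ∈ U ∨ w ∈ V }⟩
instance {α : Type*} : Inter (Language α) := ⟨fun U V => { w | w ∈ U ∧ w ∈ V }⟩
instance {α : Type*} : EmptyCollection (Language α) := ⟨{ w | False }⟩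
theorem IsShuffle.comm {α : Type*} {u v w : List α} (h : IsShuffle u v w) :
    IsShuffle v u w := by
  induction h with
  | nil => exact .nil
  | left _ ih => exact .right ih
  | right _ ih => exact .left ih

theorem IsShuffle.nil_left {α : Type*} : ∀ {v w : List α}, IsShuffle [] v w → w = v
  | _, _, .nil => rfl
  | _, _, .right h => by rw [IsShuffle.nil_left h]

theorem IsShuffle.of_nil_right {α : Type*} : ∀ (u : List α), IsShuffle u [] u
  | [] => .nil
  | _ :: u => .left (of_nil_right u)

theorem IsShuffle.assoc {α : Type*} {x c w : List α} (h2 : IsShuffle x c w) :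
    ∀ {a b : List α}, IsShuffle a b x → ∃ y, IsShuffle b c y ∧ IsShuffle a y w := by
  induction h2 with
  | nil =>
    intro a b h1
    cases h1
    exact ⟨[], .nil, .nil⟩
  | left _ ih =>
    intro a b h1
    cases h1 with
    | left h1' =>
      obtain ⟨y, hy1, hy2⟩ := ih h1'
      exact ⟨y, hy1, .left hy2⟩
    | right h1' =>
      obtain ⟨y, hy1, hy2⟩ := ih h1'
      exact ⟨_ :: y, .left hy1, .right hy2⟩
  | right _ ih =>
    intro a b h1
    obtain ⟨y, hy1, hy2⟩ := ih h1
    exact ⟨_ :: y, .right hy1, .right hy2⟩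

theorem IsShuffle.assoc' {α : Type*} {a b c y w : List α}
    (hbc : IsShuffle b c y) (hay : IsShuffle a y w) :
    ∃ x, IsShuffle a b x ∧ IsShuffle x c w := by
  obtain ⟨z, h1, h2⟩ := hay.comm.assoc hbc.comm
  exact ⟨z, h1.comm, h2.comm⟩

namespace Language

variable {α : Type*}

theorem shuffle_comm (U V : Language α) : U.shuffle V = V.shuffle U := by
  ext w
  constructor <;> rintro ⟨u, hu, v, hv, h⟩ <;> exact ⟨v, hv, u, hu, h.comm⟩

theorem shuffle_assoc (A B C : Language α) :
    (A.shuffle B).shuffle C = A.shuffle (B.shuffle C) := by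
  ext w
  constructor
  · rintro ⟨x, ⟨a, ha, b, hb, hab⟩, c, hc, hxc⟩
    obtain ⟨y, hy1, hy2⟩ := hxc.assoc hab
    exact ⟨a, ha, y, ⟨b, hb, c, hc, hy1⟩, hy2⟩
  · rintro ⟨a, ha, y, ⟨b, hb, c, hc, hbc⟩, hay⟩
    obtain ⟨x, hx1, hx2⟩ := hbc.assoc' hay
    exact ⟨x, ⟨a, ha, b, hb, hx1⟩, c, hc, hx2⟩

theorem shuffle_one (L : Language α) : L.shuffle 1 = L := by
  ext w
  constructor
  · rintro ⟨u, hu, v, hv, h⟩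
    rw [Language.mem_one] at hv
    subst hv
    exact h.comm.nil_left ▸ hu
  · intro hw
    exact ⟨w, hw, [], by rw [Language.mem_one], IsShuffle.of_nil_right w⟩

theorem shuffle_mono {A B C D : Language α} (h1 : ∀ ⦃w⦄, w ∈ A → w ∈ C)
    (h2 : ∀ ⦃w⦄, w ∈ B → w ∈ D) : ∀ ⦃w⦄, w ∈ A.shuffle B → w ∈ C.shuffle D := by
  rintro w ⟨u, hu, v, hv, h⟩
  exact ⟨u, h1 hu, v, h2 hv, h⟩

theorem shufflePow_add (L : Language α) (m n : ℕ) :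
    L.shufflePow (m + n) = (L.shufflePow m).shuffle (L.shufflePow n) := by
  induction n with
  | zero => simp [Language.shufflePow, shuffle_one]
  | succ n ih =>
    show (L.shufflePow (m + n)).shuffle L = _
    rw [ih, shuffle_assoc]
    rfl

theorem shufflePow_mono {A B : Language α} (h : ∀ ⦃w⦄, w ∈ A → w ∈ B) (n : ℕ) :
    ∀ ⦃w⦄, w ∈ A.shufflePow n → w ∈ B.shufflePow n := by
  induction n with
  | zero => exact fun w hw => hw
  | succ n ih => exact shuffle_mono ih h

theorem nil_mem_shuffleStar (L : Language α) : [] ∈ L.shuffleStar :=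
  ⟨0, by rw [Language.shufflePow, Language.mem_one]⟩

theorem shuffleStar_mono {A B : Language α} (h : ∀ ⦃w⦄, w ∈ A → w ∈ B) :
    ∀ ⦃w⦄, w ∈ A.shuffleStar → w ∈ B.shuffleStar := by
  rintro w ⟨n, hn⟩
  exact ⟨n, shufflePow_mono h n hn⟩

theorem subset_shuffleStar (L : Language α) : ∀ ⦃w⦄, w ∈ L → w ∈ L.shuffleStar := by
  intro w hw
  exact ⟨1, [], by rw [Language.shufflePow, Language.mem_one], w, hw, (IsShuffle.of_nil_right w).comm⟩

theorem mem_shuffleStar_of_shuffle {L : Language α} {x y w : List α}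
    (hx : x ∈ L.shuffleStar) (hy : y ∈ L.shuffleStar) (h : IsShuffle x y w) :
    w ∈ L.shuffleStar := by
  obtain ⟨m, hm⟩ := hx
  obtain ⟨n, hn⟩ := hy
  exact ⟨m + n, by rw [shufflePow_add]; exact ⟨x, hm, y, hn, h⟩⟩

end Language
theorem shuffleStar_shuffle_shuffleStar {α : Type*} (U V : Language α) :
    (U.shuffle V.shuffleStar).shuffleStar
      = U.shuffle (U ∪ V).shuffleStar ∪ {[]} := by
  have hUsub : ∀ ⦃w⦄, w ∈ U → w ∈ (U ∪ V).shuffleStar := fun w hw =>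
    Language.subset_shuffleStar _ (Or.inl hw)
  have hVstar : ∀ ⦃w⦄, w ∈ V.shuffleStar → w ∈ (U ∪ V).shuffleStar :=
    Language.shuffleStar_mono (fun w hw => Or.inr hw)
  ext w
  constructor
  · rintro ⟨n, hn⟩
    induction n generalizing w with
    | zero =>
      rw [Language.shufflePow, Language.mem_one] at hn
      exact Or.inr hn
    | succ n ih =>
      obtain ⟨x, hx, y, ⟨u, hu, s, hs, husy⟩, hxyw⟩ := hn
      rcases ih x hx with hx' | hx'
      · obtain ⟨u', hu', t, ht, hutx⟩ := hx'
        obtain ⟨z, hz1, hz2⟩ := hxyw.assoc hutx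
        have hy : y ∈ (U ∪ V).shuffleStar :=
          Language.mem_shuffleStar_of_shuffle (hUsub hu) (hVstar hs) husy
        have hz : z ∈ (U ∪ V).shuffleStar :=
          Language.mem_shuffleStar_of_shuffle ht hy hz1
        exact Or.inl ⟨u', hu', z, hz, hz2⟩
      · have hxnil : x = [] := hx'
        subst hxnil
        have hwy : w = y := hxyw.nil_left
        subst hwy
        exact Or.inl ⟨u, hu, s, hVstar hs, husy⟩
  · rintro (⟨u, hu, t, ⟨n, hn⟩, hutw⟩ | hw)
    · have key : ∀ n (t : List α), t ∈ (U ∪ V).shufflePow n →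
          ∃ k p s, p ∈ U.shufflePow k ∧ s ∈ V.shuffleStar ∧ IsShuffle p s t := by
        intro n
        induction n with
        | zero =>
          intro t ht
          rw [Language.shufflePow, Language.mem_one] at ht
          subst ht
          exact ⟨0, [], [], by rw [Language.shufflePow, Language.mem_one],
            Language.nil_mem_shuffleStar V, .nil⟩
        | succ n ih =>
          rintro t ⟨x, hx, a, ha, hxat⟩
          obtain ⟨k, p, s, hp, hs, hpsx⟩ := ih x hx
          rcases ha with ha | ha
          · obtain ⟨z, hz1, hz2⟩ := hxat.assoc hpsx.comm
            exact ⟨k + 1, z, s, ⟨p, hp, a, ha, hz1⟩, hs, hz2.comm⟩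
          · obtain ⟨z, hz1, hz2⟩ := hxat.assoc hpsx
            have hz : z ∈ V.shuffleStar :=
              Language.mem_shuffleStar_of_shuffle hs (Language.subset_shuffleStar V ha) hz1
            exact ⟨k, p, z, hp, hz, hz2⟩
      obtain ⟨k, p, s, hp, hs, hpst⟩ := key n t hn
      obtain ⟨y, hy1, hy2⟩ := hutw.comm.assoc hpst
      have hyW : y ∈ U.shuffle V.shuffleStar := ⟨u, hu, s, hs, hy1.comm⟩
      have hUW : ∀ ⦃v⦄, v ∈ U → v ∈ U.shuffle V.shuffleStar := fun v hv =>
        ⟨v, hv, [], Language.nil_mem_shuffleStar V, IsShuffle.of_nil_right v⟩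
      exact ⟨k + 1, p, Language.shufflePow_mono hUW k hp, y, hyW, hy2⟩
    · have hwn : w = [] := hw
      subst hwn
      exact Language.nil_mem_shuffleStar _
end

section
/- Let L ⊆ Σ* be a finite language. The language perm(L)^{⧢,*} is regular if and only if for every letter a ∈ Σ such that some word of L contains a, L contains a non-empty word consisting only of the letter a (i.e., L ∩ a⁺ ≠ ∅). -/
section SP

variable {α : Type*}

theorem IsShuffle.count_eq [DecidableEq α] {u v w : List α} (h : IsShuffle u v w) :
    ∀ a, w.count a = u.count a + v.count a := by
  induction h with
  | nil => simp
  | left h ih => intro a; simp only [List.count_cons, ih a]; omega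
  | right h ih => intro a; simp only [List.count_cons, ih a]; omega

theorem isShuffle_nil_left (v : List α) : IsShuffle [] v v := by
  induction v with
  | nil => exact .nil
  | cons a v ih => exact .right ih

theorem IsShuffle.nil_right_eq {u v w : List α} (h : IsShuffle u v w) (hv : v = []) : w = u := by
  induction h with
  | nil => rfl
  | left h ih => rw [ih hv]
  | right h ih => simp at hv

theorem IsShuffle.reassoc {u v w : List α} (h : IsShuffle u v w) :
    ∀ {v₁ v₂ : List α}, IsShuffle v₁ v₂ v → ∃ z, IsShuffle u v₁ z ∧ IsShuffle z v₂ w := by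
  induction h with
  | nil =>
    intro v₁ v₂ h2
    cases h2
    exact ⟨[], .nil, .nil⟩
  | @left a u v w h ih =>
    intro v₁ v₂ h2
    obtain ⟨z, hz1, hz2⟩ := ih h2
    exact ⟨a :: z, .left hz1, .left hz2⟩
  | @right a u v w h ih =>
    intro v₁ v₂ h2
    cases h2 with
    | left h2 =>
      obtain ⟨z, hz1, hz2⟩ := ih h2
      exact ⟨a :: z, .right hz1, .left hz2⟩
    | right h2 =>
      obtain ⟨z, hz1, hz2⟩ := ih h2
      exact ⟨z, hz1, .right hz2⟩

theorem shufflePow_add {L : Language α} {m n : ℕ} {u v w : List α}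
    (hu : u ∈ L.shufflePow m) (hv : v ∈ L.shufflePow n) (h : IsShuffle u v w) :
    w ∈ L.shufflePow (m + n) := by
  induction n generalizing v w with
  | zero =>
    rw [Language.shufflePow, Language.mem_one] at hv
    rwa [h.nil_right_eq hv]
  | succ n ih =>
    obtain ⟨v₁, hv₁, v₂, hv₂, hsh⟩ := hv
    obtain ⟨z, hz1, hz2⟩ := h.reassoc hsh
    exact ⟨z, ih hv₁ hz1, v₂, hv₂, hz2⟩

theorem exists_split [DecidableEq α] :
    ∀ (w : List α) (x y : α → ℕ), (∀ a, w.count a = x a + y a) →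
      ∃ u v, IsShuffle u v w ∧ (∀ a, u.count a = x a) ∧ (∀ a, v.count a = y a) := by
  intro w
  induction w with
  | nil =>
    intro x y h
    refine ⟨[], [], .nil, fun a => ?_, fun a => ?_⟩ <;> (have := h a; simp at this ⊢; omega)
  | cons c w ih =>
    intro x y h
    by_cases hc : 0 < x c
    · obtain ⟨u, v, hsh, hu, hv⟩ := ih (Function.update x c (x c - 1)) y (fun a => by
        rcases eq_or_ne a c with rfl | hne
        · have := h a; simp [List.count_cons] at this; simp [Function.update]; omega
        · have := h a; simp [List.count_cons, hne, Ne.symm hne] at this; simp [Function.update, hne]; omega)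
      refine ⟨c :: u, v, .left hsh, fun a => ?_, hv⟩
      rcases eq_or_ne a c with rfl | hne
      · have := hu a; simp [Function.update] at this; simp [List.count_cons]; omega
      · have := hu a; simp [Function.update, hne] at this; simp [List.count_cons, hne, Ne.symm hne]; omega
    · have hyc : 0 < y c := by have := h c; simp [List.count_cons] at this; omega
      obtain ⟨u, v, hsh, hu, hv⟩ := ih x (Function.update y c (y c - 1)) (fun a => by
        rcases eq_or_ne a c with rfl | hne
        · have := h a; simp [List.count_cons] at this; simp [Function.update]; omega
        · have := h a; simp [List.count_cons, hne, Ne.symm hne] at this; simp [Function.update, hne]; omega)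
      refine ⟨u, c :: v, .right hsh, hu, fun a => ?_⟩
      rcases eq_or_ne a c with rfl | hne
      · have := hv a; simp [Function.update] at this; simp [List.count_cons]; omega
      · have := hv a; simp [Function.update, hne] at this; simp [List.count_cons, hne, Ne.symm hne]; omega

variable [DecidableEq α]

/-- The Parikh image of a word. -/
def pk (w : List α) : α → ℕ := fun a => w.count a

theorem mem_shuffleStar_iff_parikh (L : Language α) (w : List α) :
    w ∈ L.perm.shuffleStar ↔ pk w ∈ AddSubmonoid.closure (pk '' L) := by
  constructor
  · rintro ⟨n, hn⟩
    induction n generalizing w with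
    | zero =>
      rw [Language.shufflePow, Language.mem_one] at hn
      subst hn
      have : pk ([] : List α) = 0 := by funext a; simp [pk]
      rw [this]; exact zero_mem _
    | succ n ih =>
      obtain ⟨u, hu, v, hv, hsh⟩ := hn
      have hadd : pk w = pk u + pk v := by funext a; exact hsh.count_eq a
      obtain ⟨x, hx, hxc⟩ := hv
      have : pk v = pk x := funext hxc
      rw [hadd, this]
      exact add_mem (ih u hu) (AddSubmonoid.subset_closure ⟨x, hx, rfl⟩)
  · intro h
    have key : ∀ p ∈ AddSubmonoid.closure (pk '' L), ∀ u : List α, pk u = p →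
        u ∈ L.perm.shuffleStar := by
      intro p hp
      induction hp using AddSubmonoid.closure_induction with
      | mem q hq =>
        obtain ⟨x, hx, hqx⟩ := hq
        intro u hu
        exact ⟨1, [], (Language.mem_one _).2 rfl, u,
          ⟨x, hx, fun a => congrFun (hu.trans hqx.symm) a⟩, isShuffle_nil_left u⟩
      | zero =>
        intro u hu
        have : u = [] := by
          apply List.eq_nil_iff_forall_not_mem.2
          intro a ha
          have := congrFun hu a
          simp [pk] at this
          exact absurd this (by simpa [List.count_eq_zero] using ha)
        exact ⟨0, by simp [this, Language.shufflePow, Language.mem_one]⟩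
      | add x y hx hy ihx ihy =>
        intro u hu
        obtain ⟨u₁, u₂, hsh, h1, h2⟩ := exists_split u x y (fun a => by
          have := congrFun hu a; simpa [pk] using this)
        obtain ⟨m, hm⟩ := ihx u₁ (funext h1)
        obtain ⟨n, hn⟩ := ihy u₂ (funext h2)
        exact ⟨m + n, shufflePow_add hm hn hsh⟩
    exact key _ h w rfl

end SP

set_option linter.unusedSectionVars false

section Pump

variable {α : Type*} [Fintype α] [DecidableEq α]

/-- indicator vector -/
def delta (a : α) : α → ℕ := fun b => if b = a then 1 else 0

theorem multiset_sum_apply (m : Multiset (α → ℕ)) (a : α) : m.sum a = (m.map (· a)).sum := by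
  induction m using Multiset.induction with
  | empty => simp
  | cons x s ih => simp [ih]

theorem eq_sum_delta (u : α → ℕ) : u = ∑ b : α, u b • delta b := by
  funext c
  rw [Finset.sum_apply]
  simp only [Pi.smul_apply, delta, smul_eq_mul]
  rw [Finset.sum_eq_single c]
  · simp
  · intro b _ hb; simp [Ne.symm hb]
  · simp

variable (Gfin : Finset (α → ℕ)) (A : Set α) (k B M : ℕ)

/-- The submonoid generated by the generators. -/
abbrev SMon : AddSubmonoid (α → ℕ) := AddSubmonoid.closure (↑Gfin : Set (α → ℕ))

variable (hA : ∀ g ∈ Gfin, ∀ b, 0 < g b → b ∈ A)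
variable (hk : 0 < k) (hkA : ∀ a ∈ A, k • delta a ∈ SMon Gfin)
variable (hM : ∀ g ∈ Gfin, ∀ b, g b ≤ M)
variable (hB : B = Gfin.card * k * M + 1)

section

include hA hk hkA hM hB

omit hk hM hB in
theorem supp_subset : ∀ v ∈ SMon Gfin, ∀ b, 0 < v b → b ∈ A := by
  intro v hv
  induction hv using AddSubmonoid.closure_induction with
  | mem g hg => exact hA g hg
  | zero => simp
  | add x y hx hy ihx ihy =>
    intro b hb
    have : 0 < x b ∨ 0 < y b := by
      have : (x + y) b = x b + y b := rfl
      omega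
    rcases this with h | h
    · exact ihx b h
    · exact ihy b h

omit hk hM hB hA in
theorem mem_of_dvd (u : α → ℕ) (hsupp : ∀ b, 0 < u b → b ∈ A) (hdvd : ∀ b, k ∣ u b) :
    u ∈ SMon Gfin := by
  rw [eq_sum_delta u]
  apply sum_mem
  intro b _
  rcases Nat.eq_zero_or_pos (u b) with h0 | hpos
  · simp only [h0, zero_smul]; exact zero_mem _
  · obtain ⟨c, hc⟩ := hdvd b
    rw [hc, mul_comm, mul_smul]
    exact AddSubmonoid.nsmul_mem _ (hkA b (hsupp b hpos)) c

theorem pump_down {v : α → ℕ} (hv : v ∈ SMon Gfin) {a : α} (ha : B ≤ v a) :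
    ∃ v' ∈ SMon Gfin, v = v' + k • delta a := by
  obtain ⟨m, hm, hsum⟩ := AddSubmonoid.exists_multiset_of_mem_closure hv
  have hex : ∃ g₀ ∈ m, 0 < g₀ a ∧ k ≤ m.count g₀ := by
    by_contra hcon
    push_neg at hcon
    have hva : v a = (m.map (· a)).sum := by rw [← hsum, multiset_sum_apply]
    rw [Finset.sum_multiset_map_count] at hva
    have hle : ∀ x ∈ m.toFinset, m.count x • x a ≤ k * M := by
      intro x hx
      rcases Nat.eq_zero_or_pos (x a) with h0 | hpos
      · simp [h0]
      · have h1 : m.count x ≤ k := by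
          exact le_of_lt (hcon x (Multiset.mem_toFinset.1 hx) hpos)
        have h2 : x a ≤ M := hM x (hm x (Multiset.mem_toFinset.1 hx)) a
        simpa using Nat.mul_le_mul h1 h2
    have hsub : m.toFinset ⊆ Gfin := fun x hx => hm x (Multiset.mem_toFinset.1 hx)
    have hbound : v a ≤ Gfin.card * (k * M) := by
      rw [hva]
      calc ∑ x ∈ m.toFinset, m.count x • x a ≤ ∑ _x ∈ m.toFinset, k * M :=
            Finset.sum_le_sum hle
        _ = m.toFinset.card * (k * M) := by rw [Finset.sum_const, smul_eq_mul]
        _ ≤ Gfin.card * (k * M) := Nat.mul_le_mul_right _ (Finset.card_le_card hsub)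
    rw [hB] at ha
    have heq : Gfin.card * k * M = Gfin.card * (k * M) := by ring
    clear hva hle hcon hsub hsum hm
    omega
  obtain ⟨g₀, hg₀m, hg₀a, hg₀c⟩ := hex
  have hrep : Multiset.replicate k g₀ ≤ m := by
    rw [Multiset.le_iff_count]
    intro x
    rcases eq_or_ne x g₀ with rfl | hne
    · simpa using hg₀c
    · rw [Multiset.count_replicate, if_neg (Ne.symm hne)]
      exact Nat.zero_le _
  set m' := m - Multiset.replicate k g₀ with hm'
  have hmeq : m' + Multiset.replicate k g₀ = m := tsub_add_cancel_of_le hrep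
  have hveq : v = m'.sum + k • g₀ := by
    rw [← hsum, ← hmeq, Multiset.sum_add, Multiset.sum_replicate]
  set u : α → ℕ := fun b => k * g₀ b - k * delta a b with hu
  have hg₀G : g₀ ∈ Gfin := hm g₀ hg₀m
  refine ⟨m'.sum + u, ?_, ?_⟩
  · refine add_mem (AddSubmonoid.multiset_sum_mem _ _ ?_) ?_
    · intro x hx
      exact AddSubmonoid.subset_closure (hm x (Multiset.mem_of_le tsub_le_self hx))
    · refine mem_of_dvd Gfin A k hkA u ?_ ?_
      · intro b hb
        rcases Nat.eq_zero_or_pos (g₀ b) with h0 | h0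
        · exfalso; simp [hu, h0] at hb
        · exact hA g₀ hg₀G b h0
      · intro b
        exact ⟨g₀ b - delta a b, (Nat.mul_sub k _ _).symm⟩
  · funext b
    have h1 : (m'.sum + u + k • delta a) b = m'.sum b + u b + k * delta a b := rfl
    have h2 : v b = m'.sum b + k * g₀ b := by rw [hveq]; rfl
    have h3 : u b = k * g₀ b - k * delta a b := rfl
    rw [h1, h2, h3]
    have hδ : k * delta a b ≤ k * g₀ b := by
      rcases eq_or_ne b a with heq | hne
      · subst heq
        have h01 : delta b b = 1 := by simp [delta]
        rw [h01, mul_one]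
        exact Nat.le_mul_of_pos_right k hg₀a
      · have h01 : delta a b = 0 := by simp [delta, hne]
        simp [h01]
    omega

omit hA hk hM hB in
theorem iter_up {v : α → ℕ} (hv : v ∈ SMon Gfin) {a : α} (ha : a ∈ A) (t : ℕ) :
    Function.update v a (v a + k * t) ∈ SMon Gfin := by
  have : Function.update v a (v a + k * t) = v + t • (k • delta a) := by
    funext b
    rcases eq_or_ne b a with rfl | hne
    · simp [Function.update, delta, smul_eq_mul]; ring
    · simp [Function.update, hne, delta, smul_eq_mul]
  rw [this]
  exact add_mem hv (AddSubmonoid.nsmul_mem _ (hkA a ha) t)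

theorem iter_down (t : ℕ) : ∀ (v : α → ℕ), v ∈ SMon Gfin → ∀ (a : α) (c : ℕ),
    v a = c + k * t → B ≤ c → Function.update v a c ∈ SMon Gfin := by
  induction t with
  | zero =>
    intro v hv a c hc _
    have : Function.update v a c = v := by
      funext b
      rcases eq_or_ne b a with rfl | hne
      · simp [Function.update]; omega
      · simp [Function.update, hne]
    rwa [this]
  | succ t ih =>
    intro v hv a c hc hB2
    have hkt : k * (t + 1) = k * t + k := by ring
    rw [hkt] at hc
    have hva : B ≤ v a := by omega
    obtain ⟨v', hv', heq⟩ := pump_down Gfin A k B M hA hk hkA hM hB hv hva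
    have hv'b : ∀ b, b ≠ a → v' b = v b := by
      intro b hb
      have h1 : v b = v' b + k * delta a b := congrFun heq b
      have hd : delta a b = 0 := by simp [delta, hb]
      rw [hd, mul_zero] at h1
      omega
    have hv'a : v' a = c + k * t := by
      have h1 : v a = v' a + k * delta a a := congrFun heq a
      have hd : delta a a = 1 := by simp [delta]
      rw [hd, mul_one] at h1
      omega
    have := ih v' hv' a c hv'a hB2
    have hupd : Function.update v' a c = Function.update v a c := by
      funext b
      rcases eq_or_ne b a with rfl | hne
      · simp [Function.update]
      · simp [Function.update, hne, hv'b b hne]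
    rwa [hupd] at this

end

end Pump

section Rho

/-- the reduction map -/
def rho (B k n : ℕ) : ℕ := if n < B then n else B + (n - B) % k

variable {B k : ℕ}

theorem rho_lt (hk : 0 < k) (n : ℕ) : rho B k n < B + k := by
  rw [rho]
  split
  · omega
  · have := Nat.mod_lt (n - B) hk
    omega

theorem rho_le (n : ℕ) : rho B k n ≤ n := by
  rw [rho]
  split
  · omega
  · have := Nat.mod_le (n - B) k
    omega

theorem rho_spec (n : ℕ) (hn : B ≤ n) : B ≤ rho B k n ∧ ∃ t, n = rho B k n + k * t := by
  rw [rho, if_neg (by omega)]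
  refine ⟨by omega, (n - B) / k, ?_⟩
  have := Nat.mod_add_div (n - B) k
  omega

theorem rho_of_lt {n : ℕ} (hn : n < B) : rho B k n = n := if_pos hn

theorem rho_succ (hk : 0 < k) (n : ℕ) : rho B k (n + 1) = rho B k (rho B k n + 1) := by
  rcases Nat.lt_or_ge n B with h | h
  · rw [rho_of_lt h]
  · have h1 : ¬ n < B := by omega
    have h2 : ¬ n + 1 < B := by omega
    have h3 : B ≤ rho B k n := by rw [rho, if_neg h1]; omega
    have h4 : ¬ rho B k n + 1 < B := by omega
    rw [rho, if_neg h2, rho, if_neg h4, rho, if_neg h1]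
    have h5 : B + (n - B) % k + 1 - B = (n - B) % k + 1 := by omega
    rw [h5]
    have h6 : n + 1 - B = (n - B) + 1 := by omega
    rw [h6, Nat.add_mod (n - B) 1 k, Nat.add_mod ((n - B) % k) 1 k, Nat.mod_mod_of_dvd _ dvd_rfl]

end Rho

section Pump2

set_option linter.unusedSectionVars false

variable {α : Type*} [Fintype α] [DecidableEq α]
variable (Gfin : Finset (α → ℕ)) (A : Set α) (k B M : ℕ)
variable (hA : ∀ g ∈ Gfin, ∀ b, 0 < g b → b ∈ A)
variable (hk : 0 < k) (hkA : ∀ a ∈ A, k • delta a ∈ SMon Gfin)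
variable (hM : ∀ g ∈ Gfin, ∀ b, g b ≤ M)
variable (hB : B = Gfin.card * k * M + 1)

include hA hk hkA hM hB in
theorem saturation (v : α → ℕ) : v ∈ SMon Gfin ↔ (fun b => rho B k (v b)) ∈ SMon Gfin := by
  have hB0 : 0 < B := by omega
  constructor
  · intro hv
    have key : ∀ s : Finset α, (fun b => if b ∈ s then rho B k (v b) else v b) ∈ SMon Gfin := by
      intro s
      induction s using Finset.induction_on with
      | empty => simpa using hv
      | @insert a s ha ih =>
        set w : α → ℕ := fun b => if b ∈ s then rho B k (v b) else v b with hw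
        have hwa : w a = v a := by simp [hw, ha]
        have hgeq : (fun b => if b ∈ insert a s then rho B k (v b) else v b)
            = Function.update w a (rho B k (v a)) := by
          funext b
          rcases eq_or_ne b a with rfl | hne
          · simp [Function.update, hw, ha]
          · simp [Function.update, hne, hw, Finset.mem_insert, hne]
        rw [hgeq]
        rcases Nat.lt_or_ge (v a) B with h | h
        · rw [rho_of_lt h, ← hwa, Function.update_eq_self]
          exact ih
        · obtain ⟨hge, t, ht⟩ := rho_spec (B:=B) (k:=k) (v a) h
          exact iter_down Gfin A k B M hA hk hkA hM hB t w ih a (rho B k (v a))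
            (by rw [hwa, ← ht]) hge
    have := key Finset.univ
    simpa using this
  · intro hv
    have key : ∀ s : Finset α, (fun b => if b ∈ s then v b else rho B k (v b)) ∈ SMon Gfin := by
      intro s
      induction s using Finset.induction_on with
      | empty => simpa using hv
      | @insert a s ha ih =>
        set w : α → ℕ := fun b => if b ∈ s then v b else rho B k (v b) with hw
        have hwa : w a = rho B k (v a) := by simp [hw, ha]
        have hgeq : (fun b => if b ∈ insert a s then v b else rho B k (v b))
            = Function.update w a (v a) := by
          funext b
          rcases eq_or_ne b a with rfl | hne
          · simp [Function.update, hw, ha]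
          · simp [Function.update, hne, hw, Finset.mem_insert, hne]
        rw [hgeq]
        rcases Nat.lt_or_ge (v a) B with h | h
        · rw [← rho_of_lt h, ← hwa, Function.update_eq_self]
          exact ih
        · obtain ⟨hge, t, ht⟩ := rho_spec (B:=B) (k:=k) (v a) h
          have haA : a ∈ A := by
            apply supp_subset Gfin A k hA hkA w ih a
            omega
          have := iter_up Gfin A k hkA ih haA t
          rwa [hwa, ← ht] at this
    have := key Finset.univ
    simpa using this

end Pump2

section Main

set_option linter.unusedSectionVars false
set_option maxHeartbeats 1000000

open Classical in
theorem regular_of_unary {α : Type*} [Fintype α] [DecidableEq α] (L : Language α)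
    (hL : L.Finite)
    (hyp : ∀ a : α, (∃ w ∈ L, a ∈ w) → ∃ w ∈ L, w ≠ [] ∧ ∀ x ∈ w, x = a) :
    L.perm.shuffleStar.IsRegular := by
  classical
  set A : Set α := {a | ∃ w ∈ L, a ∈ w} with hAdef
  set Gfin : Finset (α → ℕ) := (hL.image pk).toFinset with hGdef
  have hGcoe : (↑Gfin : Set (α → ℕ)) = pk '' L := Set.Finite.coe_toFinset _
  have hmemG : ∀ g, g ∈ Gfin ↔ ∃ w ∈ L, pk w = g := by
    intro g
    rw [← Finset.mem_coe, hGcoe]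
    exact ⟨fun ⟨w, hw, he⟩ => ⟨w, hw, he⟩, fun ⟨w, hw, he⟩ => ⟨w, hw, he⟩⟩
  have hA : ∀ g ∈ Gfin, ∀ b, 0 < g b → b ∈ A := by
    intro g hg b hb
    obtain ⟨w, hw, rfl⟩ := (hmemG g).1 hg
    exact ⟨w, hw, List.count_pos_iff.1 hb⟩
  -- unary generators
  have hphi : ∀ a : α, ∃ m : ℕ, 0 < m ∧ (a ∈ A → m • delta a ∈ Gfin) := by
    intro a
    by_cases ha : a ∈ A
    · obtain ⟨w, hwL, hwne, hwall⟩ := hyp a ha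
      refine ⟨w.length, List.length_pos_iff.2 hwne, fun _ => (hmemG _).2 ⟨w, hwL, ?_⟩⟩
      funext b
      simp only [Pi.smul_apply, delta, smul_eq_mul]
      rcases eq_or_ne b a with rfl | hne
      · rw [if_pos rfl, mul_one, pk]
        exact List.count_eq_length.2 fun x hx => (hwall x hx).symm
      · rw [if_neg hne, mul_zero, pk]
        exact List.count_eq_zero.2 fun hmem => hne (hwall b hmem)
    · exact ⟨1, one_pos, fun h => absurd h ha⟩
  choose φ hφpos hφmem using hphi
  set k : ℕ := ∏ a : α, φ a with hkdef
  have hk : 0 < k := Finset.prod_pos fun a _ => hφpos a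
  have hkA : ∀ a ∈ A, k • delta a ∈ SMon Gfin := by
    intro a ha
    have hdvd : φ a ∣ k := Finset.dvd_prod_of_mem φ (Finset.mem_univ a)
    obtain ⟨c, hc⟩ := hdvd
    rw [hc, mul_comm, mul_smul]
    exact AddSubmonoid.nsmul_mem _ (AddSubmonoid.subset_closure (hφmem a ha)) c
  set M : ℕ := Gfin.sup fun g => Finset.univ.sup g with hMdef
  have hM : ∀ g ∈ Gfin, ∀ b, g b ≤ M := fun g hg b =>
    le_trans (Finset.le_sup (Finset.mem_univ b)) (Finset.le_sup hg)
  set B : ℕ := Gfin.card * k * M + 1 with hBdef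
  -- the DFA
  have hBk : 0 < B + k := by omega
  let rhoF : ℕ → Fin (B + k) := fun n => ⟨rho B k n, rho_lt hk n⟩
  let D : DFA α (α → Fin (B + k)) :=
    { step := fun s c => Function.update s c (rhoF ((s c : ℕ) + 1))
      start := fun _ => rhoF 0
      accept := {s | (fun b => ((s b : ℕ))) ∈ SMon Gfin} }
  refine ⟨Fin (Fintype.card (α → Fin (B + k))), inferInstance,
    DFA.reindex (Fintype.equivFin (α → Fin (B + k))) D, ?_⟩
  rw [DFA.accepts_reindex]
  have heval : ∀ w : List α, D.eval w = fun b => rhoF (w.count b) := by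
    intro w
    induction w using List.reverseRecOn with
    | nil =>
      funext b
      simp only [DFA.eval_nil]
      show D.start b = rhoF ((List.nil : List α).count b)
      rw [List.count_nil]
    | append_singleton w c ih =>
      rw [DFA.eval_append_singleton, ih]
      show Function.update (fun b => rhoF (w.count b)) c
          (rhoF ((rhoF (w.count c) : ℕ) + 1)) = fun b => rhoF ((w ++ [c]).count b)
      funext b
      rcases eq_or_ne b c with rfl | hne
      · simp only [Function.update_self]
        have h1 : (w ++ [b]).count b = w.count b + 1 := by
          simp [List.count_append]
        rw [h1]
        have h2 : ((rhoF (w.count b) : ℕ)) = rho B k (w.count b) := rfl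
        apply Fin.ext
        show rho B k (rho B k (w.count b) + 1) = rho B k (w.count b + 1)
        exact (rho_succ hk (w.count b)).symm
      · simp only [Function.update_of_ne hne]
        have h1 : (w ++ [c]).count b = w.count b := by
          have hbc : b ∉ [c] := fun h => hne (List.mem_singleton.1 h)
          rw [List.count_append, List.count_eq_zero.2 hbc, add_zero]
        rw [h1]
  ext w
  rw [DFA.mem_accepts, heval]
  show (fun b => rho B k (w.count b)) ∈ SMon Gfin ↔ w ∈ L.perm.shuffleStar
  rw [mem_shuffleStar_iff_parikh, ← hGcoe]
  exact (saturation Gfin A k B M hA hk hkA hM hBdef (pk w)).symm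

theorem count_flatten_replicate {α : Type*} [DecidableEq α] (n : ℕ) (l : List α) (b : α) :
    ((List.replicate n l).flatten).count b = n * l.count b := by
  induction n with
  | zero => simp
  | succ n ih =>
    simp only [List.replicate_succ, List.flatten_cons, List.count_append, ih]
    ring

theorem sum_count_eq_length {α : Type*} [Fintype α] [DecidableEq α] (l : List α) :
    ∑ b : α, l.count b = l.length := by
  have h := Multiset.sum_count_eq_card (s := Finset.univ) (m := (l : Multiset α))
    (fun a _ => Finset.mem_univ a)
  simpa using h

theorem unary_of_regular {α : Type*} [Fintype α] [DecidableEq α] (L : Language α)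
    (hL : L.Finite) (hreg : L.perm.shuffleStar.IsRegular) :
    ∀ a : α, (∃ w ∈ L, a ∈ w) → ∃ w ∈ L, w ≠ [] ∧ ∀ x ∈ w, x = a := by
  rintro a ⟨w₀, hw₀L, haw₀⟩
  by_contra hno
  push_neg at hno
  set Gfin : Finset (α → ℕ) := (hL.image pk).toFinset with hGdef
  have hmemG : ∀ g, g ∈ Gfin ↔ ∃ w ∈ L, pk w = g := by
    intro g
    rw [← Finset.mem_coe, hGdef, Set.Finite.coe_toFinset]
    exact ⟨fun ⟨w, hw, he⟩ => ⟨w, hw, he⟩, fun ⟨w, hw, he⟩ => ⟨w, hw, he⟩⟩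
  set M : ℕ := Gfin.sup (fun g => Finset.univ.sup g) with hMdef
  have hM : ∀ g ∈ Gfin, ∀ b, g b ≤ M := fun g hg b =>
    le_trans (Finset.le_sup (Finset.mem_univ b)) (Finset.le_sup hg)
  have RATE : ∀ v ∈ AddSubmonoid.closure (pk '' L),
      v a ≤ M * ∑ b ∈ Finset.univ.erase a, v b := by
    intro v hv
    induction hv using AddSubmonoid.closure_induction with
    | mem g hg =>
      obtain ⟨w, hwL, rfl⟩ := hg
      rcases Nat.eq_zero_or_pos (pk w a) with h0 | hpos
      · rw [h0]; exact Nat.zero_le _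
      · have hwne : w ≠ [] := by
          intro h
          rw [h] at hpos
          simp [pk] at hpos
        obtain ⟨x, hxw, hxa⟩ := hno w hwL hwne
        have h1 : 1 ≤ ∑ b ∈ Finset.univ.erase a, pk w b := by
          have hx1 : 1 ≤ pk w x := List.count_pos_iff.2 hxw
          have hx2 : x ∈ Finset.univ.erase a := Finset.mem_erase.2 ⟨hxa, Finset.mem_univ x⟩
          exact le_trans hx1 (Finset.single_le_sum (fun i _ => Nat.zero_le _) hx2)
        have h2 : pk w a ≤ M := hM (pk w) ((hmemG (pk w)).2 ⟨w, hwL, rfl⟩) a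
        calc pk w a ≤ M * 1 := by omega
          _ ≤ M * ∑ b ∈ Finset.univ.erase a, pk w b := Nat.mul_le_mul_left M h1
    | zero => simp
    | add x y hx hy ihx ihy =>
      have hxy : ∀ b, (x + y) b = x b + y b := fun b => rfl
      rw [hxy]
      calc x a + y a
          ≤ M * ∑ b ∈ Finset.univ.erase a, x b + M * ∑ b ∈ Finset.univ.erase a, y b :=
            Nat.add_le_add ihx ihy
        _ = M * ∑ b ∈ Finset.univ.erase a, ((x b) + (y b)) := by
            rw [Finset.sum_add_distrib]; ring
        _ = M * ∑ b ∈ Finset.univ.erase a, (x + y) b := by simp only [hxy]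
  obtain ⟨σ, hfin, D, hD⟩ := hreg
  set pa : ℕ := w₀.count a with hpadef
  have hpa : 0 < pa := List.count_pos_iff.2 haw₀
  set r : List α := w₀.filter (fun b => b ≠ a) with hrdef
  set Q : ℕ := r.length with hQdef
  have hw₀ne : w₀ ≠ [] := by
    intro h
    rw [h] at haw₀
    exact absurd haw₀ (List.not_mem_nil)
  have hQ : 0 < Q := by
    obtain ⟨x, hxw, hxa⟩ := hno w₀ hw₀L hw₀ne
    have : x ∈ r := List.mem_filter.2 ⟨hxw, by simp [hxa]⟩
    rw [hQdef]
    exact List.length_pos_iff.2 (fun h => by rw [h] at this; exact absurd this (List.not_mem_nil))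
  have hra : r.count a = 0 := by
    rw [List.count_eq_zero]
    intro hmem
    have := (List.mem_filter.1 hmem).2
    simp at this
  have hrb : ∀ b, b ≠ a → r.count b = w₀.count b := by
    intro b hb
    exact List.count_filter (by simpa using hb)
  set C : ℕ := M * Q with hCdef
  set u : ℕ → List α := fun n => List.replicate (n * pa) a with hudef
  set y : ℕ → List α := fun n => (List.replicate n r).flatten with hydef
  have hcount : ∀ m n b, (u m ++ y n).count b
      = (if a = b then m * pa else 0) + n * r.count b := by
    intro m n b
    rw [List.count_append, hudef, hydef]
    simp only []
    rw [count_flatten_replicate, List.count_replicate]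
    simp only [beq_iff_eq]
  have hmem1 : ∀ n, (u n ++ y n) ∈ L.perm.shuffleStar := by
    intro n
    rw [mem_shuffleStar_iff_parikh]
    have hpk : pk (u n ++ y n) = n • pk w₀ := by
      funext b
      have h1 : (n • pk w₀) b = n * w₀.count b := rfl
      rw [h1]
      show (u n ++ y n).count b = n * w₀.count b
      rw [hcount]
      rcases eq_or_ne b a with rfl | hb
      · rw [if_pos rfl, hra, mul_zero, add_zero, ← hpadef]
      · rw [if_neg (Ne.symm hb), hrb b hb, zero_add]
    rw [hpk]
    exact AddSubmonoid.nsmul_mem _ (AddSubmonoid.subset_closure (Set.mem_image_of_mem pk hw₀L)) n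
  have hmem2 : ∀ m n : ℕ, 0 < n → C * n < m → (u m ++ y n) ∉ L.perm.shuffleStar := by
    intro m n hn hcn hmem
    rw [mem_shuffleStar_iff_parikh] at hmem
    have h1 := RATE _ hmem
    have ha1 : pk (u m ++ y n) a = m * pa := by
      show (u m ++ y n).count a = m * pa
      rw [hcount, if_pos rfl, hra, mul_zero, add_zero]
    have ha2 : ∀ b ∈ Finset.univ.erase a, pk (u m ++ y n) b = n * r.count b := by
      intro b hb
      have hba : b ≠ a := (Finset.mem_erase.1 hb).1
      show (u m ++ y n).count b = n * r.count b
      rw [hcount, if_neg (Ne.symm hba), zero_add]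
    rw [ha1, Finset.sum_congr rfl ha2] at h1
    have h3 : ∑ b ∈ Finset.univ.erase a, n * r.count b ≤ n * Q := by
      rw [← Finset.mul_sum]
      apply Nat.mul_le_mul_left
      calc ∑ b ∈ Finset.univ.erase a, r.count b
          ≤ ∑ b : α, r.count b :=
            Finset.sum_le_sum_of_subset (Finset.erase_subset a Finset.univ)
        _ = r.length := sum_count_eq_length r
    have h4 : m ≤ m * pa := Nat.le_mul_of_pos_right m hpa
    have h5 : m * pa ≤ M * (n * Q) := le_trans h1 (Nat.mul_le_mul_left M h3)
    have h6 : M * (n * Q) = C * n := by rw [hCdef]; ring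
    omega
  have key : ∀ i j : ℕ, i < j →
      D.evalFrom D.start (u ((C+1)^i)) = D.evalFrom D.start (u ((C+1)^j)) → False := by
    intro i j hlt hEq
    set n : ℕ := (C+1)^i with hndef
    set m : ℕ := (C+1)^j with hmdef
    have hn1 : 1 ≤ n := Nat.one_le_pow i (C+1) (by omega)
    have hm : C * n < m := by
      have h1 : (C+1)^(i+1) ≤ (C+1)^j := Nat.pow_le_pow_right (by omega) (by omega)
      have h2 : (C+1)^(i+1) = n * (C+1) := by rw [hndef, pow_succ]
      have h3 : n * (C+1) = C * n + n := by ring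
      omega
    have hacc1 : u n ++ y n ∈ D.accepts := by rw [hD]; exact hmem1 n
    have hacc2 : u m ++ y n ∈ D.accepts := by
      rw [DFA.mem_accepts] at hacc1 ⊢
      show D.evalFrom D.start (u m ++ y n) ∈ D.accept
      rw [DFA.evalFrom_of_append, ← hEq, ← DFA.evalFrom_of_append]
      exact hacc1
    rw [hD] at hacc2
    exact hmem2 m n hn1 hm hacc2
  obtain ⟨i, j, hij, hFij⟩ := Finite.exists_ne_map_eq_of_infinite
    (fun j : ℕ => D.evalFrom D.start (u ((C+1)^j)))
  rcases Ne.lt_or_gt hij with hlt | hlt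
  · exact key i j hlt hFij
  · exact key j i hlt hFij.symm

end Main

theorem finite_perm_shuffleStar_regular_iff {α : Type*} [Fintype α]
    [DecidableEq α] (L : Language α) (hL : L.Finite) :
    L.perm.shuffleStar.IsRegular ↔
      ∀ a : α, (∃ w ∈ L, a ∈ w) → ∃ w ∈ L, w ≠ [] ∧ ∀ x ∈ w, x = a :=
  ⟨unary_of_regular L hL, regular_of_unary L hL⟩
end
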